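/- Let Y be a topological vector space with convex cone D, H ⊂ D\(−D), f : X → Y a map on a set X, and x₀ ∈ X. Suppose there exists ξ ∈ D⁺ ∩ H^{+s} (i.e., ξ is a continuous linear functional with ξ(d) ≥ 0 for all d ∈ D and inf{ξ(h) : h ∈ H} > 0) such that ξ is bounded below on the set (f(X) − f(x₀)) ∩ (−(⋃_{λ>0} λH + D)). Then there exists ε > 0 such that (f(x₀) − εH − D) ∩ f(X) = ∅. -/

import Mathlib

open Filter Topology Pointwise

theorem lower_bounded_implies_eps_efficient {X Y : Type*}
    [AddCommGroup Y] [Module ℝ Y] [TopologicalSpace Y] [IsTopologicalAddGroup Y]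
    [ContinuousSMul ℝ Y]
    (D H : Set Y)
    (hDadd : ∀ a ∈ D, ∀ b ∈ D, a + b ∈ D)
    (hDsmul : ∀ α : ℝ, 0 ≤ α → ∀ d ∈ D, α • d ∈ D)
    (hH : H ⊆ D \ (-D))
    (f : X → Y) (x₀ : X)
    (ξ : Y →L[ℝ] ℝ) (hξD : ∀ d ∈ D, 0 ≤ ξ d)
    (hξH : ∃ c : ℝ, 0 < c ∧ ∀ h ∈ H, c ≤ ξ h)
    (hbdd : ∃ m : ℝ, ∀ y ∈ (Set.range f - {f x₀}) ∩ (-((⋃ (l : ℝ) (_ : 0 < l), l • H) + D)),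
      m ≤ ξ y) :
    ∃ ε : ℝ, 0 < ε ∧ ({f x₀} - ε • H - D) ∩ Set.range f = ∅ := by
  obtain ⟨c, hc, hcH⟩ := hξH
  obtain ⟨m, hm⟩ := hbdd
  set ε : ℝ := (|m| + 1) / c with hεdef
  have hε : 0 < ε := by positivity
  refine ⟨ε, hε, ?_⟩
  rw [Set.eq_empty_iff_forall_notMem]
  rintro y ⟨hy1, hy2⟩
  obtain ⟨p, hp, d, hd, rfl⟩ := hy1
  obtain ⟨z, hz, h', hh', rfl⟩ := hp
  obtain ⟨h, hh, rfl⟩ := hh'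
  rw [Set.mem_singleton_iff] at hz; subst hz
  -- the point y = f x₀ - ε•h - d
  have hmem : (f x₀ - ε • h - d) - f x₀ ∈
      (Set.range f - {f x₀}) ∩ (-((⋃ (l : ℝ) (_ : 0 < l), l • H) + D)) := by
    constructor
    · exact ⟨_, hy2, f x₀, rfl, rfl⟩
    · rw [Set.mem_neg]
      have : -((f x₀ - ε • h - d) - f x₀) = ε • h + d := by abel
      rw [this]
      refine Set.add_mem_add ?_ hd
      exact Set.mem_iUnion.mpr ⟨ε, Set.mem_iUnion.mpr ⟨hε, Set.smul_mem_smul_set hh⟩⟩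
  have hle := hm _ hmem
  have hval : ξ ((f x₀ - ε • h - d) - f x₀) = -(ε * ξ h) - ξ d := by
    simp only [map_sub, map_smul, smul_eq_mul]
    ring
  rw [hval] at hle
  have h1 : c ≤ ξ h := hcH h hh
  have h2 : 0 ≤ ξ d := hξD d hd
  have h3 : ε * c ≤ ε * ξ h := by nlinarith
  have h4 : ε * c = |m| + 1 := by rw [hεdef]; field_simp
  have := abs_nonneg m
  have := neg_abs_le m
  nlinarith
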